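/- Let f : T × X → ℝ∪{±∞} be an admissible integrand on a complete σ-finite inner regular measure space and A ∈ 𝒜. If α : A → ℝ∪{±∞} is measurable with m_f(t) := inf_{x∈X} f_t(x) < α(t) for all t ∈ A, then there exists a strongly measurable function x : A → X such that f_t(x(t)) ≤ α(t) for μ-a.e. t ∈ A. -/

import Mathlib

open MeasureTheory Topology Filter Set Pointwise
open scoped ENNReal NNReal

noncomputable section

/-- Lower semicontinuity (in the set-valued sense) of `Φ` at every point of `B`,
relative to `B`. -/
def LscOn {T Y : Type*} [TopologicalSpace T] [TopologicalSpace Y]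
    (B : Set T) (Φ : T → Set Y) : Prop :=
  ∀ t ∈ B, ∀ V : Set Y, IsOpen V → (Φ t ∩ V).Nonempty →
    ∀ᶠ s in nhdsWithin t B, (Φ s ∩ V).Nonempty

/-- Epigraph of an extended-real-valued function. -/
def epi {X : Type*} (g : X → EReal) : Set (X × ℝ) :=
  {p : X × ℝ | g p.1 ≤ (p.2 : EReal)}

/-- Strict epigraph. -/
def epis {X : Type*} (g : X → EReal) : Set (X × ℝ) :=
  {p : X × ℝ | g p.1 < (p.2 : EReal)}

/-- Inner regularity of a measure: every measurable set of finite measure can be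
approximated from inside by compact sets. -/
def InnerRegularM {T : Type*} [TopologicalSpace T] [MeasurableSpace T]
    (μ : Measure T) : Prop :=
  ∀ ε : ℝ≥0∞, 0 < ε → ∀ B : Set T, MeasurableSet B → μ B < ⊤ →
    ∃ K ⊆ B, IsCompact K ∧ μ (B \ K) < ε

/-- Lusin integrand. -/
def LusinIntegrand {T X : Type*} [TopologicalSpace T] [MeasurableSpace T]
    [TopologicalSpace X] (μ : Measure T) (f : T → X → EReal) : Prop :=
  ∀ ε : ℝ≥0∞, 0 < ε → ∀ A : Set T, MeasurableSet A → μ A < ⊤ →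
    ∃ B ⊆ A, IsCompact B ∧ μ (A \ B) < ε ∧ LscOn B (fun t => epi (f t))

/-- Uniform Lusin family of integrands. -/
def UniformLusinFamily {T X I : Type*} [TopologicalSpace T] [MeasurableSpace T]
    [TopologicalSpace X] (μ : Measure T) (f : I → T → X → EReal) : Prop :=
  ∀ ε : ℝ≥0∞, 0 < ε → ∀ A : Set T, MeasurableSet A → μ A < ⊤ →
    ∃ B ⊆ A, IsCompact B ∧ μ (A \ B) < ε ∧ ∀ i : I, LscOn B (fun t => epi (f i t))

/-- Scorza-Dragoni function. -/
def ScorzaDragoniFun {T X : Type*} [TopologicalSpace T] [MeasurableSpace T]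
    [TopologicalSpace X] (μ : Measure T) (g : T → X → EReal) : Prop :=
  ∀ ε : ℝ≥0∞, 0 < ε → ∀ A : Set T, MeasurableSet A → μ A < ⊤ →
    ∃ B ⊆ A, IsCompact B ∧ μ (A \ B) < ε ∧
      ContinuousOn (fun p : T × X => g p.1 p.2) (B ×ˢ (Set.univ : Set X))

/-- Lusin multifunction (uniform family version). -/
def UniformLusinMultifamily {T X I : Type*} [TopologicalSpace T] [MeasurableSpace T]
    [TopologicalSpace X] (μ : Measure T) (C : I → T → Set X) : Prop :=
  ∀ ε : ℝ≥0∞, 0 < ε → ∀ A : Set T, MeasurableSet A → μ A < ⊤ →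
    ∃ B ⊆ A, IsCompact B ∧ μ (A \ B) < ε ∧ ∀ i : I, LscOn B (C i)

/-- `g ∈ Γ(X)`: proper, convex (convex epigraph) and lower semicontinuous. -/
def InGamma {X : Type*} [AddCommGroup X] [Module ℝ X] [TopologicalSpace X]
    (g : X → EReal) : Prop :=
  (∃ x, g x ≠ ⊤) ∧ (∀ x, g x ≠ ⊥) ∧ LowerSemicontinuous g ∧ Convex ℝ (epi g)

/-- Admissible integrand. -/
def AdmissibleIntegrand {T X : Type*} [TopologicalSpace T] [MeasurableSpace T]
    [NormedAddCommGroup X] [NormedSpace ℝ X] (μ : Measure T)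
    (f : T → X → EReal) : Prop :=
  ∃ (I : Type) (fi : I → T → X → EReal),
    UniformLusinFamily μ fi ∧ (∀ i t, InGamma (fi i t)) ∧
    ∀ t, epi (f t) = closure (epi (fun x => ⨅ i : I, fi i t x))

/-- Admissible multifunction. -/
def AdmissibleMultifunction {T X : Type*} [TopologicalSpace T] [MeasurableSpace T]
    [NormedAddCommGroup X] [NormedSpace ℝ X] (μ : Measure T)
    (C : T → Set X) : Prop :=
  ∃ (I : Type) (Ci : I → T → Set X),
    UniformLusinMultifamily μ Ci ∧ (∀ i t, IsClosed (Ci i t) ∧ Convex ℝ (Ci i t)) ∧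
    ∀ t, C t = closure (⋃ i : I, Ci i t)

open Classical in
/-- Indicator function with values in `EReal`. -/
def indE {X : Type*} (S : Set X) : X → EReal := fun x => if x ∈ S then 0 else ⊤

/-- Positive part of an extended real, as an `ℝ≥0∞`. -/
def ERealPos (x : EReal) : ℝ≥0∞ := if x = ⊤ then ⊤ else ENNReal.ofReal x.toReal

/-- Upper integral of an extended-real-valued function, with the convention
`+∞ + (-∞) = +∞`. -/
def upInt {T : Type*} [MeasurableSpace T] (μ : Measure T) (g : T → EReal) : EReal :=
  if (∫⁻ t, ERealPos (g t) ∂μ) = ⊤ then ⊤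
  else ((∫⁻ t, ERealPos (g t) ∂μ : ℝ≥0∞) : EReal) - ((∫⁻ t, ERealPos (-(g t)) ∂μ : ℝ≥0∞) : EReal)

end


section Helpers

open MeasureTheory Topology Filter Set

lemma exists_real_le_lt {a : EReal} {q : ℝ} (h : a < (q : EReal)) :
    ∃ r : ℝ, a ≤ (r : EReal) ∧ r < q := by
  induction a with
  | bot => exact ⟨q - 1, bot_le, by linarith⟩
  | coe r => exact ⟨r, le_refl _, EReal.coe_lt_coe_iff.1 h⟩
  | top => exact absurd h (by simp)

lemma LscOn.mono {T Y : Type*} [TopologicalSpace T] [TopologicalSpace Y] {B B' : Set T}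
    {Φ : T → Set Y} (h : LscOn B Φ) (hsub : B' ⊆ B) : LscOn B' Φ :=
  fun t ht V hV hne => ((h t (hsub ht) V hV hne).filter_mono (nhdsWithin_mono t hsub))

lemma LscOn.exists_open {T Y : Type*} [TopologicalSpace T] [TopologicalSpace Y] {B : Set T}
    {Φ : T → Set Y} (h : LscOn B Φ) {V : Set Y} (hV : IsOpen V) :
    ∃ W : Set T, IsOpen W ∧ B ∩ W = {t ∈ B | (Φ t ∩ V).Nonempty} := by
  classical
  have key : ∀ t ∈ {t ∈ B | (Φ t ∩ V).Nonempty}, ∃ U : Set T, IsOpen U ∧ t ∈ U ∧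
      U ∩ B ⊆ {t ∈ B | (Φ t ∩ V).Nonempty} := by
    intro t ht
    have h1 := h t ht.1 V hV ht.2
    rw [eventually_nhdsWithin_iff] at h1
    rcases eventually_nhds_iff.1 h1 with ⟨U, hU1, hU2, hU3⟩
    exact ⟨U, hU2, hU3, fun s hs => ⟨hs.2, hU1 s hs.1 hs.2⟩⟩
  choose! U hUo hUt hUsub using key
  refine ⟨⋃ t ∈ {t ∈ B | (Φ t ∩ V).Nonempty}, U t, isOpen_biUnion hUo, ?_⟩
  apply Set.Subset.antisymm
  · rintro s ⟨hsB, hsW⟩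
    rcases Set.mem_iUnion₂.1 hsW with ⟨t, ht, hst⟩
    exact hUsub t ht ⟨hst, hsB⟩
  · rintro t ⟨htB, htne⟩
    exact ⟨htB, Set.mem_iUnion₂.2 ⟨t, ⟨htB, htne⟩, hUt t ⟨htB, htne⟩⟩⟩

lemma lemA {T : Type*} [TopologicalSpace T] [MeasurableSpace T] [OpensMeasurableSpace T]
    {μ : Measure T} (hreg : InnerRegularM μ) {ι : Type*} (W : ι → Set T)
    (hW : ∀ i, IsOpen (W i)) {R : Set T} (hR : MeasurableSet R) (hfin : μ R < ⊤) :
    ∃ S : Set ι, S.Countable ∧ μ ((R ∩ ⋃ i, W i) \ ⋃ i ∈ S, W i) = 0 := by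
  set R' := R ∩ ⋃ i, W i with hR'
  have hR'm : MeasurableSet R' := hR.inter (isOpen_iUnion hW).measurableSet
  have hR'fin : μ R' < ⊤ := lt_of_le_of_lt (measure_mono Set.inter_subset_left) hfin
  have key : ∀ n : ℕ, ∃ s : Finset ι, μ (R' \ ⋃ i ∈ s, W i) < ((n : ℝ≥0∞) + 1)⁻¹ := by
    intro n
    obtain ⟨K, hKsub, hKcpt, hKsmall⟩ :=
      hreg ((n : ℝ≥0∞) + 1)⁻¹ (ENNReal.inv_pos.2 (by simp)) R' hR'm hR'fin
    obtain ⟨s, hs⟩ := hKcpt.elim_finite_subcover W hW (hKsub.trans Set.inter_subset_right)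
    refine ⟨s, lt_of_le_of_lt (measure_mono ?_) hKsmall⟩
    intro t ht
    exact ⟨ht.1, fun hK => ht.2 (by simpa using hs hK)⟩
  choose s hs using key
  refine ⟨⋃ n, ↑(s n), Set.countable_iUnion (fun n => (s n).countable_toSet), ?_⟩
  by_contra hne
  obtain ⟨n, hn⟩ := ENNReal.exists_inv_nat_lt hne
  have h1 : μ (R' \ ⋃ i ∈ ⋃ n, ↑(s n), W i) ≤ μ (R' \ ⋃ i ∈ s n, W i) := by
    apply measure_mono
    apply Set.diff_subset_diff_right
    exact Set.biUnion_subset_biUnion_left (Set.subset_iUnion (fun n => ((s n : Set ι))) n)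
  have h2 : ((n : ℝ≥0∞) + 1)⁻¹ ≤ ((n : ℝ≥0∞))⁻¹ := ENNReal.inv_le_inv.2 le_self_add
  exact absurd (lt_of_le_of_lt (h1.trans ((hs n).le.trans h2)) hn) (lt_irrefl _)

lemma sm_of_countable_fibers {T X : Type*} [MeasurableSpace T] [TopologicalSpace X]
    [TopologicalSpace.PseudoMetrizableSpace X] {u : T → X}
    (h1 : (Set.range u).Countable) (h2 : ∀ x : X, MeasurableSet (u ⁻¹' {x})) :
    MeasureTheory.StronglyMeasurable u := by
  borelize X
  rw [stronglyMeasurable_iff_measurable_separable]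
  constructor
  · intro S hS
    have he : u ⁻¹' S = ⋃ x ∈ Set.range u ∩ S, u ⁻¹' {x} := by
      ext t
      constructor
      · intro ht
        exact Set.mem_biUnion ⟨⟨t, rfl⟩, ht⟩ rfl
      · rintro ht
        rcases Set.mem_iUnion₂.1 ht with ⟨x, hx, htx⟩
        have : u t = x := htx
        rw [Set.mem_preimage, this]
        exact hx.2
    rw [he]
    exact MeasurableSet.biUnion (h1.mono Set.inter_subset_left) fun x _ => h2 x
  · exact h1.isSeparable

end Helpers

section Helpers2
open MeasureTheory Topology Filter Set

lemma epi_inter_prod_nonempty {X : Type*} {φt : X → EReal} {s : Set X} {q : ℝ} :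
    (epi φt ∩ s ×ˢ Set.Iio q).Nonempty ↔ ∃ y ∈ s, φt y < (q : EReal) := by
  constructor
  · rintro ⟨p, hp1, hp2, hp3⟩
    exact ⟨p.1, hp2, lt_of_le_of_lt hp1 (EReal.coe_lt_coe_iff.2 hp3)⟩
  · rintro ⟨y, hy, hφ⟩
    obtain ⟨r, hr1, hr2⟩ := exists_real_le_lt hφ
    exact ⟨(y, r), hr1, hy, hr2⟩

lemma lemC {T X : Type*} [TopologicalSpace T] [MeasurableSpace T] [OpensMeasurableSpace T]
    [PseudoMetricSpace X] {μ : Measure T} (hreg : InnerRegularM μ)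
    (φ : T → X → EReal) (q : ℝ) {R : Set T} (hR : MeasurableSet R) (hfin : μ R < ⊤)
    (hop : ∀ (z : X) (δ : ℝ), 0 < δ → ∃ W : Set T, IsOpen W ∧
      R ∩ W = {t ∈ R | ∃ y ∈ Metric.ball z δ, φ t y < (q : EReal)})
    (B : X → Set X) (u : T → X) (G : Set T)
    (hu1 : (Set.range u).Countable) (hu2 : ∀ x : X, MeasurableSet (u ⁻¹' {x}))
    (hG : MeasurableSet G) (hGR : G ⊆ R)
    (hinv : ∀ t ∈ G, ∃ y ∈ B (u t), φ t y < (q : EReal))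
    {ε : ℝ} (hε : 0 < ε) :
    ∃ (u' : T → X) (G' : Set T), (Set.range u').Countable ∧
      (∀ x : X, MeasurableSet (u' ⁻¹' {x})) ∧ MeasurableSet G' ∧ G' ⊆ G ∧
      μ (G \ G') = 0 ∧ (∀ t ∈ G', ∃ y ∈ Metric.ball (u' t) ε, φ t y < (q : EReal)) ∧
      (∀ t, u' t = u t ∨ (t ∈ G ∧ u' t ∈ B (u t))) := by
  classical
  choose Wop hWopen hWeq using fun z : X => hop z ε hε
  set F : X → Set T := fun c => G ∩ u ⁻¹' {c} with hF
  have hFm : ∀ c, MeasurableSet (F c) := fun c => hG.inter (hu2 c)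
  have hFfin : ∀ c, μ (F c) < ⊤ :=
    fun c => lt_of_le_of_lt (measure_mono (fun t ht => hGR ht.1)) hfin
  have hcov : ∀ c : X, F c ⊆ ⋃ y : ↥(B c), Wop (↑y : X) := by
    intro c t ht
    obtain ⟨y, hyB, hyφ⟩ := hinv t ht.1
    have huc : u t = c := ht.2
    rw [huc] at hyB
    have hmem : t ∈ R ∩ Wop y := by
      rw [hWeq y]
      exact ⟨hGR ht.1, y, Metric.mem_ball_self hε, hyφ⟩
    exact Set.mem_iUnion.2 ⟨⟨y, hyB⟩, hmem.2⟩
  have key := fun c : X =>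
    lemA hreg (fun y : ↥(B c) => Wop (↑y : X)) (fun y => hWopen _) (hFm c) (hFfin c)
  choose S hScnt hSnull using key
  have hSnull' : ∀ c, μ (F c \ ⋃ y ∈ S c, Wop (↑y : X)) = 0 := by
    intro c
    have h0 := hSnull c
    rwa [Set.inter_eq_self_of_subset_left (hcov c)] at h0
  -- enumeration of the countable sets (with junk element c added)
  have hSne : ∀ c : X, ((Subtype.val '' S c : Set X) ∪ {c}).Nonempty := fun c => ⟨c, Or.inr rfl⟩
  have hScnt' : ∀ c, ((Subtype.val '' S c : Set X) ∪ {c}).Countable :=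
    fun c => ((hScnt c).image _).union (Set.countable_singleton c)
  choose E hE using fun c => (hScnt' c).exists_eq_range (hSne c)
  set G' : Set T := {t | t ∈ G ∧ ∃ n : ℕ, t ∈ Wop (E (u t) n)} with hG'
  set u' : T → X := fun t =>
    if h : t ∈ G ∧ ∃ n : ℕ, t ∈ Wop (E (u t) n) then E (u t) (Nat.find h.2) else u t with hu'
  have hmemG' : ∀ t, t ∈ G' ↔ (t ∈ G ∧ ∃ n : ℕ, t ∈ Wop (E (u t) n)) := fun t => Iff.rfl
  -- range of E c is in S' ∪ {c}
  have hErange : ∀ c n, E c n ∈ (Subtype.val '' S c : Set X) ∪ {c} := by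
    intro c n; rw [hE c]; exact ⟨n, rfl⟩
  -- G' measurable
  have hG'eq : G' = ⋃ c ∈ Set.range u, ⋃ n : ℕ, (G ∩ u ⁻¹' {c} ∩ Wop (E c n)) := by
    ext t
    constructor
    · rintro ⟨htG, n, hn⟩
      exact Set.mem_biUnion ⟨t, rfl⟩ (Set.mem_iUnion.2 ⟨n, ⟨⟨htG, rfl⟩, hn⟩⟩)
    · intro ht
      rcases Set.mem_iUnion₂.1 ht with ⟨c, _, hc⟩
      rcases Set.mem_iUnion.1 hc with ⟨n, ⟨⟨htG, htc⟩, htW⟩⟩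
      have : u t = c := htc
      exact ⟨htG, n, by rw [this]; exact htW⟩
  have hG'm : MeasurableSet G' := by
    rw [hG'eq]
    exact MeasurableSet.biUnion hu1 fun c _ =>
      MeasurableSet.iUnion fun n => ((hG.inter (hu2 c)).inter (hWopen _).measurableSet)
  have hG'sub : G' ⊆ G := fun t ht => ht.1
  -- null
  have hnull : μ (G \ G') = 0 := by
    have hsub : G \ G' ⊆ ⋃ c ∈ Set.range u, (F c \ ⋃ y ∈ S c, Wop (↑y : X)) := by
      rintro t ⟨htG, htn⟩
      refine Set.mem_biUnion ⟨t, rfl⟩ ⟨⟨htG, rfl⟩, ?_⟩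
      intro hmem
      rcases Set.mem_iUnion₂.1 hmem with ⟨y, hyS, htW⟩
      apply htn
      refine ⟨htG, ?_⟩
      have : (↑y : X) ∈ (Subtype.val '' S (u t) : Set X) ∪ {u t} := Or.inl ⟨y, hyS, rfl⟩
      rw [hE (u t)] at this
      rcases this with ⟨n, hn⟩
      exact ⟨n, by rw [hn]; exact htW⟩
    refine measure_mono_null hsub ?_
    rw [measure_biUnion_null_iff hu1]
    exact fun c _ => hSnull' c
  -- invariant
  have hinv' : ∀ t ∈ G', ∃ y ∈ Metric.ball (u' t) ε, φ t y < (q : EReal) := by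
    intro t ht
    have h : t ∈ G ∧ ∃ n : ℕ, t ∈ Wop (E (u t) n) := ht
    have hu'val : u' t = E (u t) (Nat.find h.2) := dif_pos h
    have htW : t ∈ Wop (E (u t) (Nat.find h.2)) := Nat.find_spec h.2
    have hmem : t ∈ R ∩ Wop (E (u t) (Nat.find h.2)) := ⟨hGR h.1, htW⟩
    rw [hWeq] at hmem
    rw [hu'val]
    exact hmem.2
  -- closeness
  have hclose : ∀ t, u' t = u t ∨ (t ∈ G ∧ u' t ∈ B (u t)) := by
    intro t
    by_cases h : t ∈ G ∧ ∃ n : ℕ, t ∈ Wop (E (u t) n)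
    · have hu'val : u' t = E (u t) (Nat.find h.2) := dif_pos h
      rcases hErange (u t) (Nat.find h.2) with hmem | hmem
      · rcases hmem with ⟨y, hyS, hyv⟩
        right
        refine ⟨h.1, ?_⟩
        rw [hu'val, ← hyv]
        exact y.2
      · left; rw [hu'val]; exact hmem
    · left; exact dif_neg h
  -- range countable
  have hrange : (Set.range u').Countable := by
    have hsub : Set.range u' ⊆ Set.range u ∪ ⋃ c ∈ Set.range u, Set.range (E c) := by
      rintro _ ⟨t, rfl⟩
      by_cases h : t ∈ G ∧ ∃ n : ℕ, t ∈ Wop (E (u t) n)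
      · right
        refine Set.mem_biUnion ⟨t, rfl⟩ ?_
        have hv : u' t = E (u t) (Nat.find h.2) := dif_pos h
        rw [hv]
        exact ⟨Nat.find h.2, rfl⟩
      · left
        have hv : u' t = u t := dif_neg h
        rw [hv]; exact ⟨t, rfl⟩
    refine Set.Countable.mono hsub ?_
    exact hu1.union (Set.Countable.biUnion hu1 fun c _ => by rw [← hE c]; exact hScnt' c)
  -- fibers measurable
  have hfib : ∀ x : X, MeasurableSet (u' ⁻¹' {x}) := by
    intro x
    have heq : u' ⁻¹' {x} = (G'ᶜ ∩ u ⁻¹' {x}) ∪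
        ⋃ c ∈ Set.range u, ⋃ n : ℕ, ⋃ (_ : E c n = x),
          ((G ∩ u ⁻¹' {c} ∩ Wop (E c n)) \ ⋃ m : ℕ, ⋃ (_ : m < n), Wop (E c m)) := by
      ext t
      constructor
      · intro ht
        have htx : u' t = x := ht
        by_cases h : t ∈ G ∧ ∃ n : ℕ, t ∈ Wop (E (u t) n)
        · right
          have hu'val : u' t = E (u t) (Nat.find h.2) := dif_pos h
          refine Set.mem_biUnion ⟨t, rfl⟩ ?_
          refine Set.mem_iUnion.2 ⟨Nat.find h.2, ?_⟩
          refine Set.mem_iUnion.2 ⟨by rw [← hu'val]; exact htx, ?_⟩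
          refine ⟨⟨⟨h.1, rfl⟩, Nat.find_spec h.2⟩, ?_⟩
          intro hc
          rcases Set.mem_iUnion.1 hc with ⟨m, hm⟩
          rcases Set.mem_iUnion.1 hm with ⟨hmn, hmW⟩
          exact Nat.find_min h.2 hmn hmW
        · left
          have hv : u' t = u t := dif_neg h
          exact ⟨fun hc => h hc, by rw [Set.mem_preimage, ← hv]; exact htx⟩
      · intro ht
        rcases ht with ht | ht
        · have h : ¬(t ∈ G ∧ ∃ n : ℕ, t ∈ Wop (E (u t) n)) := ht.1
          show u' t ∈ ({x} : Set X)
          rw [hu']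
          simp only [dif_neg h]
          exact ht.2
        · rcases Set.mem_iUnion₂.1 ht with ⟨c, _, hc⟩
          rcases Set.mem_iUnion.1 hc with ⟨n, hn⟩
          rcases Set.mem_iUnion.1 hn with ⟨hEx, hmem⟩
          obtain ⟨⟨⟨htG, htc⟩, htW⟩, htnm⟩ := hmem
          have huc : u t = c := htc
          have h : t ∈ G ∧ ∃ m : ℕ, t ∈ Wop (E (u t) m) := ⟨htG, ⟨n, by rw [huc]; exact htW⟩⟩
          have hfind : Nat.find h.2 = n := by
            rw [Nat.find_eq_iff]
            refine ⟨by rw [huc]; exact htW, ?_⟩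
            intro m hmn hmW
            apply htnm
            refine Set.mem_iUnion.2 ⟨m, Set.mem_iUnion.2 ⟨hmn, ?_⟩⟩
            rw [← huc]; exact hmW
          show u' t ∈ ({x} : Set X)
          have : u' t = E (u t) (Nat.find h.2) := dif_pos h
          rw [this, hfind, huc, hEx]
          rfl
    rw [heq]
    refine (hG'm.compl.inter (hu2 x)).union ?_
    refine MeasurableSet.biUnion hu1 fun c _ => ?_
    refine MeasurableSet.iUnion fun n => MeasurableSet.iUnion fun _ => ?_
    refine MeasurableSet.diff ((hG.inter (hu2 c)).inter (hWopen _).measurableSet) ?_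
    exact MeasurableSet.iUnion fun m => MeasurableSet.iUnion fun _ => (hWopen _).measurableSet
  exact ⟨u', G', hrange, hfib, hG'm, hG'sub, hnull, hinv', hclose⟩

end Helpers2

section Helpers3
open MeasureTheory Topology Filter Set

lemma lemB {T X : Type*} [TopologicalSpace T] [MeasurableSpace T] [OpensMeasurableSpace T]
    [NormedAddCommGroup X] [CompleteSpace X] {μ : Measure T} (hreg : InnerRegularM μ)
    (φ : T → X → EReal) (q : ℝ) {R : Set T} (hR : MeasurableSet R) (hfin : μ R < ⊤)
    (hlsc : ∀ t ∈ R, LowerSemicontinuous (φ t))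
    (h1 : ∀ t ∈ R, ∃ y : X, φ t y < (q : EReal))
    (hop : ∀ (z : X) (δ : ℝ), 0 < δ → ∃ W : Set T, IsOpen W ∧
      R ∩ W = {t ∈ R | ∃ y ∈ Metric.ball z δ, φ t y < (q : EReal)}) :
    ∃ u : T → X, MeasureTheory.StronglyMeasurable u ∧
      ∀ᵐ t ∂(μ.restrict R), φ t (u t) ≤ (q : EReal) := by
  classical
  set Bn : ℕ → X → Set X :=
    fun n c => if n = 0 then Set.univ else Metric.ball c ((1/2 : ℝ) ^ n) with hBn
  set Props : ℕ → (T → X) → Set T → Prop := fun n u G =>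
    (Set.range u).Countable ∧ (∀ x : X, MeasurableSet (u ⁻¹' {x})) ∧ MeasurableSet G ∧
    G ⊆ R ∧ (∀ t ∈ G, ∃ y ∈ Bn n (u t), φ t y < (q : EReal)) with hProps
  have hbase : Props 0 (fun _ => (0 : X)) R := by
    refine ⟨(Set.countable_singleton (0 : X)).mono (Set.range_const_subset), ?_, hR,
      subset_rfl, ?_⟩
    · intro x
      rw [Set.preimage_const]
      split <;> simp
    · intro t ht
      obtain ⟨y, hy⟩ := h1 t ht
      exact ⟨y, by simp [hBn], hy⟩
  have hstep : ∀ (n : ℕ) (u : T → X) (G : Set T), Props n u G →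
      ∃ (u' : T → X) (G' : Set T), Props (n + 1) u' G' ∧ G' ⊆ G ∧ μ (G \ G') = 0 ∧
        (∀ t, u' t = u t ∨ (t ∈ G ∧ u' t ∈ Bn n (u t))) := by
    rintro n u G ⟨hc, hfib, hmeas, hsub, hinv⟩
    obtain ⟨u', G', h1', h2', h3', h4', h5', h6', h7'⟩ :=
      lemC hreg φ q hR hfin hop (Bn n) u G hc hfib hmeas hsub hinv
        (ε := (1/2 : ℝ) ^ (n + 1)) (by positivity)
    refine ⟨u', G', ⟨h1', h2', h3', h4'.trans hsub, ?_⟩, h4', h5', h7'⟩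
    intro t ht
    simpa [hBn] using h6' t ht
  choose! stepU stepG hstepP hstepSub hstepNull hstepClose using hstep
  set seq : ℕ → (T → X) × Set T := fun n =>
    Nat.rec ((fun _ => (0 : X)), R) (fun n p => (stepU n p.1 p.2, stepG n p.1 p.2)) n with hseq
  have hseqP : ∀ n, Props n (seq n).1 (seq n).2 := by
    intro n
    induction n with
    | zero => exact hbase
    | succ n ih => exact hstepP n _ _ ih
  have hNull : ∀ n, μ ((seq n).2 \ (seq (n + 1)).2) = 0 := fun n => hstepNull n _ _ (hseqP n)
  have hSub : ∀ n, (seq (n + 1)).2 ⊆ (seq n).2 := fun n => hstepSub n _ _ (hseqP n)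
  have hClose : ∀ n t, (seq (n + 1)).1 t = (seq n).1 t ∨
      (t ∈ (seq n).2 ∧ (seq (n + 1)).1 t ∈ Bn n ((seq n).1 t)) :=
    fun n => hstepClose n _ _ (hseqP n)
  -- distance bound for n ≥ 1
  have hdist : ∀ n t, dist ((seq (n + 2)).1 t) ((seq (n + 1)).1 t) ≤ (1/2 : ℝ) ^ (n + 1) := by
    intro n t
    rcases hClose (n + 1) t with h | h
    · rw [h, dist_self]; positivity
    · have h2 := h.2
      rw [hBn] at h2
      simp only [Nat.succ_ne_zero, if_neg] at h2
      exact le_of_lt (Metric.mem_ball.1 h2)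
  set v : ℕ → T → X := fun n t => (seq (n + 1)).1 t with hv
  have hcauchy : ∀ t, CauchySeq (fun n => v n t) := by
    intro t
    apply cauchySeq_of_le_geometric (1/2 : ℝ) 1 (by norm_num)
    intro n
    rw [dist_comm]
    calc dist (v (n + 1) t) (v n t) ≤ (1/2 : ℝ) ^ (n + 1) := hdist n t
      _ = 1 * (1/2 : ℝ) ^ (n + 1) := by ring
      _ ≤ 1 * (1/2 : ℝ) ^ n := by
          apply mul_le_mul_of_nonneg_left _ (by norm_num)
          apply pow_le_pow_of_le_one (by norm_num) (by norm_num) (by omega)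
  have hlim : ∀ t, ∃ l : X, Tendsto (fun n => v n t) atTop (𝓝 l) :=
    fun t => cauchySeq_tendsto_of_complete (hcauchy t)
  choose u hu using hlim
  have husm : MeasureTheory.StronglyMeasurable u := by
    refine stronglyMeasurable_of_tendsto atTop
      (f := v) (fun n => sm_of_countable_fibers (hseqP (n + 1)).1 (hseqP (n + 1)).2.1) ?_
    rw [tendsto_pi_nhds]
    exact hu
  -- good set
  set Gd : Set T := ⋂ n, (seq n).2 with hGd
  have hGdR : Gd ⊆ R := fun t ht => (Set.mem_iInter.1 ht 0)
  have hRGn : ∀ n, μ (R \ (seq n).2) = 0 := by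
    intro n
    induction n with
    | zero =>
      have h0 : (seq 0).2 = R := rfl
      rw [h0, Set.diff_self]
      exact measure_empty
    | succ n ih =>
      have hsub2 : R \ (seq (n + 1)).2 ⊆ (R \ (seq n).2) ∪ ((seq n).2 \ (seq (n + 1)).2) := by
        intro t ht
        by_cases h : t ∈ (seq n).2
        · exact Or.inr ⟨h, ht.2⟩
        · exact Or.inl ⟨ht.1, h⟩
      exact measure_mono_null hsub2 (measure_union_null ih (hNull n))
  have hGdnull : μ (R \ Gd) = 0 := by
    rw [hGd, Set.diff_iInter]
    exact measure_iUnion_null hRGn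
  refine ⟨u, husm, ?_⟩
  rw [ae_restrict_iff' hR, ae_iff]
  refine measure_mono_null ?_ hGdnull
  intro t ht
  rw [Set.mem_setOf_eq, Classical.not_imp] at ht
  obtain ⟨htR, htq⟩ := ht
  refine ⟨htR, fun htGd => htq ?_⟩
  -- t ∈ Gd, prove the bound
  have hinvn : ∀ n : ℕ, ∃ y ∈ Bn (n + 1) (v n t), φ t y < (q : EReal) := by
    intro n
    exact (hseqP (n + 1)).2.2.2.2 t (Set.mem_iInter.1 htGd (n + 1))
  choose y hy1 hy2 using hinvn
  have hyb : ∀ n, dist (y n) (v n t) ≤ (1/2 : ℝ) ^ (n + 1) := by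
    intro n
    have := hy1 n
    rw [hBn] at this
    simp only [Nat.succ_ne_zero, if_neg] at this
    exact le_of_lt (Metric.mem_ball.1 this)
  have hyt : Tendsto (fun n => y n) atTop (𝓝 (u t)) := by
    rw [tendsto_iff_dist_tendsto_zero]
    apply squeeze_zero (fun n => dist_nonneg)
      (g := fun n => (1/2 : ℝ) ^ (n + 1) + dist (v n t) (u t))
    · intro n
      calc dist (y n) (u t) ≤ dist (y n) (v n t) + dist (v n t) (u t) := dist_triangle _ _ _
        _ ≤ (1/2 : ℝ) ^ (n + 1) + dist (v n t) (u t) := by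
            exact add_le_add (hyb n) le_rfl
    · have h2 : Tendsto (fun n : ℕ => (1/2 : ℝ) ^ (n + 1)) atTop (𝓝 0) := by
        have := tendsto_pow_atTop_nhds_zero_of_lt_one (by norm_num : (0:ℝ) ≤ 1/2)
          (by norm_num : (1/2 : ℝ) < 1)
        exact this.comp (tendsto_add_atTop_nat 1)
      have h3 : Tendsto (fun n => dist (v n t) (u t)) atTop (𝓝 0) :=
        tendsto_iff_dist_tendsto_zero.1 (hu t)
      simpa using h2.add h3
  by_contra hcon
  have hql : (q : EReal) < φ t (u t) := lt_of_not_ge hcon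
  have hev := (hyt.eventually (hlsc t htR (u t) (q : EReal) hql))
  obtain ⟨n, hn⟩ := hev.exists
  exact absurd (hy2 n) (not_lt.2 (le_of_lt hn))

end Helpers3


/-- measurable selection below a measurable bound strictly above the
infimal value function of an admissible integrand. -/
theorem stmt15 {T X : Type*} [TopologicalSpace T] [MeasurableSpace T]
    [OpensMeasurableSpace T]
    [NormedAddCommGroup X] [NormedSpace ℝ X] [CompleteSpace X]
    (μ : MeasureTheory.Measure T) [MeasureTheory.SigmaFinite μ] [μ.IsComplete]
    (hreg : InnerRegularM μ)
    (f : T → X → EReal) (hf : AdmissibleIntegrand μ f)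
    (A : Set T) (hA : MeasurableSet A)
    (α : T → EReal) (hα : Measurable α)
    (hlt : ∀ t ∈ A, (⨅ x : X, f t x) < α t) :
    ∃ x : T → X, MeasureTheory.StronglyMeasurable x ∧
      ∀ᵐ t ∂(μ.restrict A), f t (x t) ≤ α t := by
  classical
  obtain ⟨I, fi, hUL, hΓ, hepi⟩ := hf
  -- f is below each fi i
  have fle : ∀ (i : I) (t : T) (x : X), f t x ≤ fi i t x := by
    intro i t x
    by_cases htop : fi i t x = ⊤
    · rw [htop]; exact le_top
    · have hbot : fi i t x ≠ ⊥ := (hΓ i t).2.1 x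
      have hmem : (x, (fi i t x).toReal) ∈ epi fun x' => ⨅ j, fi j t x' := by
        show (⨅ j, fi j t x) ≤ (((fi i t x).toReal : ℝ) : EReal)
        refine le_trans (iInf_le _ i) ?_
        rw [EReal.coe_toReal htop hbot]
      have hmem2 : (x, (fi i t x).toReal) ∈ epi (f t) := by
        rw [hepi t]; exact subset_closure hmem
      have h3 : f t x ≤ (((fi i t x).toReal : ℝ) : EReal) := hmem2
      rwa [EReal.coe_toReal htop hbot] at h3
  -- pointwise selection of a rational level and an index
  have step1 : ∀ t ∈ A, ∃ (q : ℚ) (i : I) (y : X),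
      fi i t y < ((q : ℝ) : EReal) ∧ ((q : ℝ) : EReal) < α t := by
    intro t ht
    obtain ⟨qq, h1, h2⟩ := EReal.exists_rat_btwn_of_lt (hlt t ht)
    obtain ⟨x0, hx0⟩ := iInf_lt_iff.1 h1
    obtain ⟨r, hr1, hr2⟩ := exists_real_le_lt hx0
    have hmem : (x0, r) ∈ epi (f t) := hr1
    rw [hepi t] at hmem
    obtain ⟨p, hp, hdist⟩ := Metric.mem_closure_iff.1 hmem ((qq : ℝ) - r) (by linarith)
    have h4 : dist r p.2 ≤ dist ((x0, r) : X × ℝ) p := by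
      rw [Prod.dist_eq]; exact le_max_right _ _
    have h5 : |r - p.2| < (qq : ℝ) - r := by
      rw [← Real.dist_eq]; exact lt_of_le_of_lt h4 hdist
    have h6 : p.2 < (qq : ℝ) := by
      have := (abs_lt.1 h5).1
      linarith
    have hple : (⨅ j, fi j t p.1) ≤ ((p.2 : ℝ) : EReal) := hp
    have h7 : (⨅ j, fi j t p.1) < ((qq : ℝ) : EReal) :=
      lt_of_le_of_lt hple (EReal.coe_lt_coe_iff.2 h6)
    obtain ⟨i, hi⟩ := iInf_lt_iff.1 h7
    exact ⟨qq, i, p.1, hi, h2⟩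
  -- good measurable pieces from the uniform Lusin property
  set Am : ℕ → Set T := fun m => A ∩ spanningSets μ m with hAmdef
  have hAmm : ∀ m, MeasurableSet (Am m) := fun m => hA.inter (measurableSet_spanningSets μ m)
  have hAmfin : ∀ m, μ (Am m) < ⊤ :=
    fun m => lt_of_le_of_lt (measure_mono Set.inter_subset_right) (measure_spanningSets_lt_top μ m)
  have hMex : ∀ m k : ℕ, ∃ M : Set T, MeasurableSet M ∧ M ⊆ Am m ∧
      μ (Am m \ M) ≤ ((k : ℝ≥0∞) + 1)⁻¹ ∧ ∀ i, LscOn M (fun t => epi (fi i t)) := by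
    intro m k
    obtain ⟨B, hBA, hBc, hBsmall, hBlsc⟩ :=
      hUL ((k : ℝ≥0∞) + 1)⁻¹ (ENNReal.inv_pos.2 (by simp)) (Am m) (hAmm m) (hAmfin m)
    have hMB : Am m \ toMeasurable μ (Am m \ B) ⊆ B := by
      rintro t ⟨ht1, ht2⟩
      by_contra hn
      exact ht2 (subset_toMeasurable μ _ ⟨ht1, hn⟩)
    refine ⟨Am m \ toMeasurable μ (Am m \ B),
      (hAmm m).diff (measurableSet_toMeasurable μ _), Set.diff_subset, ?_, ?_⟩
    · have hsub : Am m \ (Am m \ toMeasurable μ (Am m \ B)) ⊆ toMeasurable μ (Am m \ B) := by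
        rintro t ⟨ht1, ht2⟩
        by_contra hn
        exact ht2 ⟨ht1, hn⟩
      calc μ (Am m \ (Am m \ toMeasurable μ (Am m \ B)))
          ≤ μ (toMeasurable μ (Am m \ B)) := measure_mono hsub
        _ = μ (Am m \ B) := measure_toMeasurable _
        _ ≤ _ := le_of_lt hBsmall
    · exact fun i => (hBlsc i).mono hMB
  choose M hMmeas hMsub hMsmall hMlsc using hMex
  have hAM : ∀ m, μ (Am m \ ⋃ k, M m k) = 0 := by
    intro m
    by_contra hne
    obtain ⟨k, hk⟩ := ENNReal.exists_inv_nat_lt hne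
    have hh1 : μ (Am m \ ⋃ k', M m k') ≤ μ (Am m \ M m k) :=
      measure_mono (Set.diff_subset_diff_right (Set.subset_iUnion _ k))
    have hh2 : ((k : ℝ≥0∞) + 1)⁻¹ ≤ ((k : ℝ≥0∞))⁻¹ := ENNReal.inv_le_inv.2 le_self_add
    exact absurd (lt_of_le_of_lt (hh1.trans ((hMsmall m k).trans hh2)) hk) (lt_irrefl _)
  have hAcov : μ (A \ ⋃ m, ⋃ k, M m k) = 0 := by
    refine measure_mono_null ?_ (measure_iUnion_null hAM)
    intro t ht
    have hsp : t ∈ ⋃ m, spanningSets μ m := by rw [iUnion_spanningSets]; trivial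
    obtain ⟨m, hm⟩ := Set.mem_iUnion.1 hsp
    exact Set.mem_iUnion.2 ⟨m, ⟨⟨ht.1, hm⟩, fun hc => ht.2 (Set.mem_iUnion.2 ⟨m, hc⟩)⟩⟩
  -- level sets of α
  set Sq : ℚ → Set T := fun q => α ⁻¹' (Set.Ioi ((q : ℝ) : EReal)) with hSqdef
  have hSqm : ∀ q, MeasurableSet (Sq q) := fun q => hα measurableSet_Ioi
  -- relatively open "some point below level q" sets
  have hDopen : ∀ (m k : ℕ) (q : ℚ) (i : I), ∃ W : Set T, IsOpen W ∧
      M m k ∩ W = {t ∈ M m k | ∃ y : X, fi i t y < ((q : ℝ) : EReal)} := by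
    intro m k q i
    obtain ⟨W, hWo, hWeq⟩ := (hMlsc m k i).exists_open
      (V := (Set.univ : Set X) ×ˢ Set.Iio ((q : ℝ))) (isOpen_univ.prod isOpen_Iio)
    refine ⟨W, hWo, hWeq.trans ?_⟩
    ext t
    simp only [Set.mem_setOf_eq, epi_inter_prod_nonempty]
    constructor
    · rintro ⟨ht1, y, _, ht2⟩; exact ⟨ht1, y, ht2⟩
    · rintro ⟨ht1, y, ht2⟩; exact ⟨ht1, y, Set.mem_univ _, ht2⟩
  choose Wd hWdopen hWdeq using hDopen
  set Rs : ℕ → ℕ → ℚ → Set T := fun m k q => M m k ∩ Sq q with hRsdef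
  have hRsm : ∀ m k q, MeasurableSet (Rs m k q) := fun m k q => (hMmeas m k).inter (hSqm q)
  have hRsfin : ∀ m k q, μ (Rs m k q) < ⊤ := fun m k q =>
    lt_of_le_of_lt (measure_mono (Set.inter_subset_left.trans (hMsub m k))) (hAmfin m)
  have hSel := fun (m k : ℕ) (q : ℚ) =>
    lemA hreg (Wd m k q) (hWdopen m k q) (hRsm m k q) (hRsfin m k q)
  choose SS hSScnt hSSnull using hSel
  haveI hcntS : ∀ (m k : ℕ) (q : ℚ), Countable ↥(SS m k q) :=
    fun m k q => (hSScnt m k q).to_subtype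
  -- countable index of pieces
  set J : Type _ := Σ (m : ℕ) (k : ℕ) (q : ℚ), ↥(SS m k q) with hJdef
  haveI : Countable J := by
    refine @instCountableSigma _ _ _ ?_
    intro m
    refine @instCountableSigma _ _ _ ?_
    intro k
    refine @instCountableSigma _ _ _ ?_
    intro q
    exact hcntS m k q
  set Ej : J → Set T := fun j => Rs j.1 j.2.1 j.2.2.1 ∩ Wd j.1 j.2.1 j.2.2.1 (↑j.2.2.2) with hEjdef
  have hEjm : ∀ j, MeasurableSet (Ej j) :=
    fun j => (hRsm _ _ _).inter (hWdopen _ _ _ _).measurableSet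
  have hEjfin : ∀ j, μ (Ej j) < ⊤ :=
    fun j => lt_of_le_of_lt (measure_mono Set.inter_subset_left) (hRsfin _ _ _)
  have hEjsubM : ∀ j, Ej j ⊆ M j.1 j.2.1 := fun j t ht => ht.1.1
  have hEjprop : ∀ (j : J), ∀ t ∈ Ej j,
      (∃ y : X, fi (↑j.2.2.2) t y < ((j.2.2.1 : ℝ) : EReal)) ∧
      ((j.2.2.1 : ℝ) : EReal) < α t := by
    intro j t ht
    constructor
    · have hmem : t ∈ M j.1 j.2.1 ∩ Wd j.1 j.2.1 j.2.2.1 ↑j.2.2.2 := ⟨ht.1.1, ht.2⟩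
      rw [hWdeq] at hmem
      exact hmem.2
    · exact ht.1.2
  -- relative openness hypotheses for the pieces
  have hEjop : ∀ (j : J), ∀ (z : X) (δ : ℝ), 0 < δ → ∃ W : Set T, IsOpen W ∧
      Ej j ∩ W = {t ∈ Ej j |
        ∃ y ∈ Metric.ball z δ, fi (↑j.2.2.2) t y < ((j.2.2.1 : ℝ) : EReal)} := by
    intro j z δ hδ
    obtain ⟨W, hWo, hWeq2⟩ := (hMlsc j.1 j.2.1 ↑j.2.2.2).exists_open
      (V := Metric.ball z δ ×ˢ Set.Iio ((j.2.2.1 : ℝ))) (Metric.isOpen_ball.prod isOpen_Iio)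
    refine ⟨W, hWo, ?_⟩
    ext t
    constructor
    · rintro ⟨ht1, ht2⟩
      have hmem : t ∈ M j.1 j.2.1 ∩ W := ⟨hEjsubM j ht1, ht2⟩
      rw [hWeq2] at hmem
      exact ⟨ht1, epi_inter_prod_nonempty.1 hmem.2⟩
    · rintro ⟨ht1, hy⟩
      have hmem : t ∈ M j.1 j.2.1 ∩ W := by
        rw [hWeq2]
        exact ⟨hEjsubM j ht1, epi_inter_prod_nonempty.2 hy⟩
      exact ⟨ht1, hmem.2⟩
  -- strongly measurable selections on each piece
  have hsel := fun j : J => lemB hreg (fi (↑j.2.2.2 : I)) ((j.2.2.1 : ℚ) : ℝ) (hEjm j)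
    (hEjfin j) (fun t _ => (hΓ (↑j.2.2.2) t).2.2.1) (fun t ht => (hEjprop j t ht).1) (hEjop j)
  choose us hussm husae using hsel
  -- enumerate the pieces
  haveI : Encodable J := Encodable.ofCountable J
  set E' : ℕ → Set T := fun n => ((Encodable.decode n : Option J)).elim ∅ Ej with hE'def
  set u' : ℕ → T → X :=
    fun n => ((Encodable.decode n : Option J)).elim (fun _ => (0 : X)) us with hu'def
  have hE'm : ∀ n, MeasurableSet (E' n) := by
    intro n
    rw [hE'def]
    cases hdec : (Encodable.decode n : Option J) with
    | none => simp [hdec]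
    | some j => simpa [hdec] using hEjm j
  have hE'enc : ∀ j : J, E' (Encodable.encode j) = Ej j := by
    intro j
    rw [hE'def]
    simp [Encodable.encodek]
  have hu'sm : ∀ n, MeasureTheory.StronglyMeasurable (u' n) := by
    intro n
    rw [hu'def]
    cases hdec : (Encodable.decode n : Option J) with
    | none => simpa [hdec] using stronglyMeasurable_const
    | some j => simpa [hdec] using hussm j
  set Q : ℕ → Set T := fun n => E' n \ ⋃ m, ⋃ (_ : m < n), E' m with hQdef
  have hQm : ∀ n, MeasurableSet (Q n) := fun n =>
    (hE'm n).diff (MeasurableSet.iUnion fun m => MeasurableSet.iUnion fun _ => hE'm m)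
  have hQsub : ∀ n, Q n ⊆ E' n := fun n => Set.diff_subset
  have hQdisj : ∀ {m n : ℕ}, m ≠ n → ∀ {t}, t ∈ Q m → t ∈ Q n → False := by
    intro m n hmn t htm htn
    rcases lt_or_gt_of_ne hmn with h | h
    · exact htn.2 (Set.mem_iUnion.2 ⟨m, Set.mem_iUnion.2 ⟨h, htm.1⟩⟩)
    · exact htm.2 (Set.mem_iUnion.2 ⟨n, Set.mem_iUnion.2 ⟨h, htn.1⟩⟩)
  have hQcover : ∀ {t}, (∃ n, t ∈ E' n) → ∃ n, t ∈ Q n := by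
    intro t ht
    refine ⟨Nat.find ht, Nat.find_spec ht, ?_⟩
    intro hc
    rcases Set.mem_iUnion.1 hc with ⟨m, hm⟩
    rcases Set.mem_iUnion.1 hm with ⟨hmn, hmE⟩
    exact Nat.find_min ht hmn hmE
  -- glue
  set xN : ℕ → T → X :=
    fun N => Nat.rec (fun _ => (0 : X)) (fun n ih => (Q n).piecewise (u' n) ih) N with hxNdef
  have hxNsm : ∀ N, MeasureTheory.StronglyMeasurable (xN N) := by
    intro N
    induction N with
    | zero => exact stronglyMeasurable_const
    | succ n ih => exact MeasureTheory.StronglyMeasurable.piecewise (hQm n) (hu'sm n) ih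
  set x : T → X := fun t => if h : ∃ n, t ∈ Q n then u' (Nat.find h) t else 0 with hxdef
  have hxQ : ∀ {t : T} {n : ℕ}, t ∈ Q n → x t = u' n t := by
    intro t n ht
    have h : ∃ n', t ∈ Q n' := ⟨n, ht⟩
    have hfind : Nat.find h = n := by
      by_contra hne
      exact hQdisj hne (Nat.find_spec h) ht
    have hval : x t = u' (Nat.find h) t := dif_pos h
    rw [hval, hfind]
  have hxlim : ∀ t, Tendsto (fun N => xN N t) atTop (𝓝 (x t)) := by
    intro t
    by_cases h : ∃ n, t ∈ Q n
    · have hval : x t = u' (Nat.find h) t := dif_pos h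
      have hconst : ∀ N, Nat.find h + 1 ≤ N → xN N t = u' (Nat.find h) t := by
        intro N hN
        induction N with
        | zero => omega
        | succ N ih =>
          have hrec : xN (N + 1) t = (Q N).piecewise (u' N) (xN N) t := rfl
          by_cases hN0 : N = Nat.find h
          · rw [hrec, hN0, Set.piecewise_eq_of_mem _ _ _ (Nat.find_spec h)]
          · have hN' : Nat.find h + 1 ≤ N := by omega
            have hnotin : t ∉ Q N := fun hc =>
              hQdisj (fun he => hN0 he.symm) (Nat.find_spec h) hc
            rw [hrec, Set.piecewise_eq_of_notMem _ _ _ hnotin, ih hN']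
      rw [hval]
      exact tendsto_atTop_of_eventually_const hconst
    · have hzero : ∀ N, xN N t = 0 := by
        intro N
        induction N with
        | zero => rfl
        | succ N ih =>
          have hrec : xN (N + 1) t = (Q N).piecewise (u' N) (xN N) t := rfl
          have hnotin : t ∉ Q N := fun hc => h ⟨N, hc⟩
          rw [hrec, Set.piecewise_eq_of_notMem _ _ _ hnotin, ih]
      have hval : x t = 0 := dif_neg h
      rw [hval]
      simp only [hzero]
      exact tendsto_const_nhds
  have hxsm : MeasureTheory.StronglyMeasurable x :=
    stronglyMeasurable_of_tendsto atTop hxNsm (tendsto_pi_nhds.2 hxlim)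
  refine ⟨x, hxsm, ?_⟩
  rw [ae_restrict_iff' hA, ae_iff]
  -- three null sets
  set N2 : Set T := ⋃ m, ⋃ k, ⋃ q : ℚ,
    ((Rs m k q ∩ ⋃ i, Wd m k q i) \ ⋃ i ∈ SS m k q, Wd m k q i) with hN2def
  set N3 : Set T := ⋃ j : J,
    {t ∈ Ej j | ¬ fi (↑j.2.2.2) t (us j t) ≤ ((j.2.2.1 : ℝ) : EReal)} with hN3def
  have hN2null : μ N2 = 0 :=
    measure_iUnion_null fun m => measure_iUnion_null fun k =>
      measure_iUnion_null fun q => hSSnull m k q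
  have hN3null : μ N3 = 0 := by
    refine measure_iUnion_null fun j => ?_
    have hae := husae j
    rw [ae_restrict_iff' (hEjm j), ae_iff] at hae
    refine measure_mono_null ?_ hae
    rintro t ⟨ht1, ht2⟩
    rw [Set.mem_setOf_eq, Classical.not_imp]
    exact ⟨ht1, ht2⟩
  refine measure_mono_null ?_
    (measure_union_null (measure_union_null hAcov hN2null) hN3null)
  intro t ht
  rw [Set.mem_setOf_eq, Classical.not_imp] at ht
  obtain ⟨htA, htbad⟩ := ht
  by_cases h1 : t ∈ A \ ⋃ m, ⋃ k, M m k
  · exact Or.inl (Or.inl h1)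
  by_cases h2 : t ∈ N2
  · exact Or.inl (Or.inr h2)
  by_cases h3 : t ∈ N3
  · exact Or.inr h3
  exfalso
  apply htbad
  have htMM : t ∈ ⋃ m, ⋃ k, M m k := by
    by_contra hc
    exact h1 ⟨htA, hc⟩
  rcases Set.mem_iUnion.1 htMM with ⟨m, hm⟩
  rcases Set.mem_iUnion.1 hm with ⟨k, htM⟩
  obtain ⟨q, i, y, hy1, hy2⟩ := step1 t htA
  have htRs : t ∈ Rs m k q := ⟨htM, hy2⟩
  have htD : t ∈ M m k ∩ Wd m k q i := by
    rw [hWdeq]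
    exact ⟨htM, y, hy1⟩
  have htBig : t ∈ Rs m k q ∩ ⋃ i', Wd m k q i' := ⟨htRs, Set.mem_iUnion.2 ⟨i, htD.2⟩⟩
  have htS : t ∈ ⋃ i' ∈ SS m k q, Wd m k q i' := by
    by_contra hc
    exact h2 (Set.mem_iUnion.2 ⟨m, Set.mem_iUnion.2 ⟨k, Set.mem_iUnion.2 ⟨q, ⟨htBig, hc⟩⟩⟩⟩)
  rcases Set.mem_iUnion₂.1 htS with ⟨i', hi'S, hti'⟩
  have htEj : t ∈ Ej (⟨m, k, q, ⟨i', hi'S⟩⟩ : J) := ⟨htRs, hti'⟩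
  have hEx : ∃ n, t ∈ E' n := ⟨Encodable.encode (⟨m, k, q, ⟨i', hi'S⟩⟩ : J), by
    rw [hE'enc]; exact htEj⟩
  obtain ⟨n, htQ⟩ := hQcover hEx
  have hxval : x t = u' n t := hxQ htQ
  have hE'n : t ∈ E' n := hQsub n htQ
  cases hdec : (Encodable.decode n : Option J) with
  | none =>
    exfalso
    rw [hE'def] at hE'n
    simp [hdec] at hE'n
  | some j0 =>
    have htEj0 : t ∈ Ej j0 := by
      rw [hE'def] at hE'n
      simpa [hdec] using hE'n
    have hu'n : u' n = us j0 := by rw [hu'def]; simp [hdec]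
    have hb : fi (↑j0.2.2.2) t (us j0 t) ≤ ((j0.2.2.1 : ℝ) : EReal) := by
      by_contra hc
      exact h3 (Set.mem_iUnion.2 ⟨j0, ⟨htEj0, hc⟩⟩)
    have hαt : ((j0.2.2.1 : ℝ) : EReal) < α t := (hEjprop j0 t htEj0).2
    calc f t (x t) ≤ fi (↑j0.2.2.2) t (x t) := fle _ _ _
      _ = fi (↑j0.2.2.2) t (us j0 t) := by rw [hxval, hu'n]
      _ ≤ ((j0.2.2.1 : ℝ) : EReal) := hb
      _ ≤ α t := le_of_lt hαt
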